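/- Let G = (Z/qZ)^{⊕N} with N ≤ ω and q a natural number (where Z_0 = Z), and for i < N let G_i be the subgroup of elements supported in {0,...,i}. For every finite index subgroup H of G there exist elements g_i ∈ G_i (i < N) such that: g_i(i) fails to be invertible in Z/qZ for fewer than [G:H] many indices i; H ∩ G_i = Σ_{j ≤ i} (Z/qZ)·g_j for all i < N; and H = Σ_{i<N} (Z/qZ)·g_i. Moreover if q = 0 then g_i(i) ≠ 0 for all i. -/

import Mathlib

private def auxSupp (q : ℕ) (N : ℕ∞) (s : Set {i : ℕ // (i : ℕ∞) < N}) :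
    AddSubgroup ({i : ℕ // (i : ℕ∞) < N} →₀ ZMod q) where
  carrier := {f | ∀ j, j ∉ s → f j = 0}
  add_mem' := fun {a b} ha hb j hj => by simp [Finsupp.add_apply, ha j hj, hb j hj]
  zero_mem' := fun j hj => rfl
  neg_mem' := fun {a} ha j hj => by simp [Finsupp.neg_apply, ha j hj]

private lemma mem_auxSupp {q : ℕ} {N : ℕ∞} {s : Set {i : ℕ // (i : ℕ∞) < N}}
    {f : {i : ℕ // (i : ℕ∞) < N} →₀ ZMod q} :
    f ∈ auxSupp q N s ↔ ∀ j, j ∉ s → f j = 0 := Iff.rfl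

lemma aux_zmod_cyclic (q : ℕ) (S : AddSubgroup (ZMod q)) :
    ∃ d, S = AddSubgroup.zmultiples d := by
  have : IsAddCyclic S := AddSubgroup.isAddCyclic S
  obtain ⟨g, hg⟩ := IsAddCyclic.exists_generator (α := S)
  refine ⟨(g : ZMod q), le_antisymm ?_ ?_⟩
  · intro x hx
    obtain ⟨k, hk⟩ := AddSubgroup.mem_zmultiples_iff.mp (hg ⟨x, hx⟩)
    exact AddSubgroup.mem_zmultiples_iff.mpr ⟨k, by
      have := congrArg (Subtype.val) hk
      simpa using this⟩
  · intro x hx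
    obtain ⟨k, hk⟩ := AddSubgroup.mem_zmultiples_iff.mp hx
    rw [← hk]
    exact AddSubgroup.zsmul_mem S g.2 k

/-- Structure of finite index subgroups of G = (Z/qZ)^{⊕N} for N ≤ ω
(with the convention Z₀ = Z, i.e. `ZMod 0 = ℤ`): there are triangular generators
g_i supported on {0,…,i} such that g_i(i) is non-invertible for fewer than [G:H]
indices, H ∩ G_i is generated by g_0,…,g_i, H is generated by all g_i, and if
q = 0 then g_i(i) ≠ 0 for all i. -/
theorem stmt_14 (q : ℕ) (N : ℕ∞)
    (H : AddSubgroup ({i : ℕ // (i : ℕ∞) < N} →₀ ZMod q)) (hH : H.FiniteIndex) :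
    ∃ g : {i : ℕ // (i : ℕ∞) < N} → ({i : ℕ // (i : ℕ∞) < N} →₀ ZMod q),
      (∀ i, ∀ j ∈ (g i).support, (j : ℕ) ≤ (i : ℕ)) ∧
      ({i | ¬ IsUnit ((g i) i)}.Finite ∧
        Nat.card {i | ¬ IsUnit ((g i) i)} < H.index) ∧
      (∀ i, ∀ f : {i : ℕ // (i : ℕ∞) < N} →₀ ZMod q,
        (f ∈ H ∧ ∀ j : {i : ℕ // (i : ℕ∞) < N}, (i : ℕ) < (j : ℕ) → f j = 0) ↔
          f ∈ AddSubgroup.closure {x | ∃ j : {i : ℕ // (i : ℕ∞) < N}, (j : ℕ) ≤ (i : ℕ) ∧ x = g j}) ∧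
      H = AddSubgroup.closure (Set.range g) ∧
      (q = 0 → ∀ i, (g i) i ≠ 0) := by
  classical
  have hidx : H.index ≠ 0 := hH.index_ne_zero
  let Gi : ℕ → AddSubgroup ({i : ℕ // (i : ℕ∞) < N} →₀ ZMod q) := fun n => auxSupp q N {j | (j : ℕ) ≤ n}
  have memGi : ∀ (n : ℕ) (f : {i : ℕ // (i : ℕ∞) < N} →₀ ZMod q), f ∈ Gi n ↔ ∀ j : {i : ℕ // (i : ℕ∞) < N}, n < (j : ℕ) → f j = 0 := by
    intro n f
    rw [mem_auxSupp]
    exact ⟨fun h j hj => h j (by simpa using hj), fun h j hj => h j (by simpa using hj)⟩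
  let S : {i : ℕ // (i : ℕ∞) < N} → AddSubgroup (ZMod q) := fun i => AddSubgroup.map (Finsupp.applyAddHom i) (H ⊓ Gi i)
  have memS : ∀ (i : {i : ℕ // (i : ℕ∞) < N}) (x : ZMod q),
      x ∈ S i ↔ ∃ f, (f ∈ H ∧ ∀ j : {i : ℕ // (i : ℕ∞) < N}, (i : ℕ) < (j : ℕ) → f j = 0) ∧ f i = x := by
    intro i x
    simp only [S, AddSubgroup.mem_map, AddSubgroup.mem_inf]
    constructor
    · rintro ⟨f, ⟨hfH, hfG⟩, rfl⟩
      exact ⟨f, ⟨hfH, (memGi i f).mp hfG⟩, rfl⟩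
    · rintro ⟨f, ⟨hfH, hfG⟩, rfl⟩
      exact ⟨f, ⟨hfH, (memGi i f).mpr hfG⟩, rfl⟩
  -- choose generators
  have hgex : ∀ i : {i : ℕ // (i : ℕ∞) < N}, ∃ f : {i : ℕ // (i : ℕ∞) < N} →₀ ZMod q,
      (f ∈ H ∧ ∀ j : {i : ℕ // (i : ℕ∞) < N}, (i : ℕ) < (j : ℕ) → f j = 0) ∧ S i = AddSubgroup.zmultiples (f i) := by
    intro i
    obtain ⟨d, hd⟩ := aux_zmod_cyclic q (S i)
    have hdS : d ∈ S i := hd ▸ AddSubgroup.mem_zmultiples d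
    obtain ⟨f, hf, hfi⟩ := (memS i d).mp hdS
    exact ⟨f, hf, by rw [hfi]; exact hd⟩
  choose g hg hgS using hgex
  have hgH : ∀ i, g i ∈ H := fun i => (hg i).1
  have hgsupp : ∀ (i : {i : ℕ // (i : ℕ∞) < N}) (j : {i : ℕ // (i : ℕ∞) < N}), (i : ℕ) < (j : ℕ) → g i j = 0 := fun i => (hg i).2
  -- key induction lemma
  have key : ∀ (n : ℕ) (f : {i : ℕ // (i : ℕ∞) < N} →₀ ZMod q), f ∈ H → (∀ j : {i : ℕ // (i : ℕ∞) < N}, n ≤ (j : ℕ) → f j = 0) →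
      f ∈ AddSubgroup.closure {x | ∃ j : {i : ℕ // (i : ℕ∞) < N}, (j : ℕ) < n ∧ x = g j} := by
    intro n
    induction n with
    | zero =>
      intro f hfH hfz
      have hf0 : f = 0 := Finsupp.ext fun j => hfz j (Nat.zero_le _)
      rw [hf0]; exact AddSubgroup.zero_mem _
    | succ n ih =>
      intro f hfH hfz
      by_cases hn : (n : ℕ∞) < N
      · set i : {i : ℕ // (i : ℕ∞) < N} := ⟨n, hn⟩ with hi
        have hival : (i : ℕ) = n := rfl
        have hfi : f i ∈ S i :=
          (memS i _).mpr ⟨f, ⟨hfH, fun j hj => hfz j (by omega)⟩, rfl⟩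
        rw [hgS i] at hfi
        obtain ⟨k, hk⟩ := AddSubgroup.mem_zmultiples_iff.mp hfi
        have hf' : f - k • g i ∈ H := H.sub_mem hfH (H.zsmul_mem (hgH i) k)
        have hz' : ∀ j : {i : ℕ // (i : ℕ∞) < N}, n ≤ (j : ℕ) → (f - k • g i) j = 0 := by
          intro j hj
          rcases eq_or_lt_of_le hj with heq | hlt
          · have hji : j = i := Subtype.ext heq.symm
            rw [hji]
            simp [Finsupp.sub_apply, Finsupp.smul_apply, hk]
          · have h1 : f j = 0 := hfz j (by omega)
            have h2 : g i j = 0 := hgsupp i j (by omega)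
            simp [Finsupp.sub_apply, Finsupp.smul_apply, h1, h2]
        have hrec := ih (f - k • g i) hf' hz'
        have hmono : AddSubgroup.closure {x | ∃ j : {i : ℕ // (i : ℕ∞) < N}, (j : ℕ) < n ∧ x = g j} ≤
            AddSubgroup.closure {x | ∃ j : {i : ℕ // (i : ℕ∞) < N}, (j : ℕ) < n + 1 ∧ x = g j} :=
          AddSubgroup.closure_mono (fun x => by rintro ⟨j, hj, rfl⟩; exact ⟨j, by omega, rfl⟩)
        have hgi : g i ∈ AddSubgroup.closure {x | ∃ j : {i : ℕ // (i : ℕ∞) < N}, (j : ℕ) < n + 1 ∧ x = g j} :=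
          AddSubgroup.subset_closure ⟨i, by omega, rfl⟩
        have : f = (f - k • g i) + k • g i := by abel
        rw [this]
        exact AddSubgroup.add_mem _ (hmono hrec) (AddSubgroup.zsmul_mem _ hgi k)
      · have hle : N ≤ (n : ℕ∞) := not_lt.mp hn
        have hall : ∀ j : {i : ℕ // (i : ℕ∞) < N}, n ≤ (j : ℕ) → f j = 0 := by
          intro j hj
          exfalso
          have : ((j : ℕ) : ℕ∞) < (n : ℕ∞) := lt_of_lt_of_le j.2 hle
          have : (j : ℕ) < n := by exact_mod_cast this
          omega
        have hrec := ih f hfH hall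
        exact AddSubgroup.closure_mono
          (fun x => by rintro ⟨j, hj, rfl⟩; exact ⟨j, by omega, rfl⟩) hrec
  -- closure of bounded generators is contained in H ∩ Gi
  have closure_le : ∀ n : ℕ,
      AddSubgroup.closure {x | ∃ j : {i : ℕ // (i : ℕ∞) < N}, (j : ℕ) ≤ n ∧ x = g j} ≤ H ⊓ Gi n := by
    intro n
    rw [AddSubgroup.closure_le]
    rintro x ⟨j, hji, rfl⟩
    exact ⟨hgH j, (memGi n (g j)).mpr fun k hk => hgsupp j k (lt_of_le_of_lt hji hk)⟩
  -- unit criterion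
  have unit_of_one : ∀ i : {i : ℕ // (i : ℕ∞) < N}, (1 : ZMod q) ∈ S i → IsUnit (g i i) := by
    intro i h1
    rw [hgS i, AddSubgroup.mem_zmultiples_iff] at h1
    obtain ⟨k, hk⟩ := h1
    rw [zsmul_eq_mul] at hk
    exact IsUnit.of_mul_eq_one _ (by rw [mul_comm] at hk; exact hk)
  refine ⟨g, ?_, ?_, ?_, ?_, ?_⟩
  · -- support bound
    intro i j hj
    by_contra hlt
    exact (Finsupp.mem_support_iff.mp hj) (hgsupp i j (by omega))
  · -- counting
    let E : Finset {i : ℕ // (i : ℕ∞) < N} →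
        AddSubgroup ({i : ℕ // (i : ℕ∞) < N} →₀ ZMod q) := fun s =>
      AddSubgroup.closure ((fun j => Finsupp.single j (1 : ZMod q)) '' s)
    have hsingle_not : ∀ (a : {i : ℕ // (i : ℕ∞) < N}) (s : Finset {i : ℕ // (i : ℕ∞) < N}),
        ¬ IsUnit ((g a) a) → (∀ b ∈ s, (b : ℕ) < (a : ℕ)) →
        Finsupp.single a (1 : ZMod q) ∉ H ⊔ E s := by
      intro a s ha hs hmem
      rw [AddSubgroup.mem_sup] at hmem
      obtain ⟨h, hh, c, hc, hsum⟩ := hmem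
      have hcs : c ∈ auxSupp q N ↑s := by
        refine (AddSubgroup.closure_le _).mpr ?_ hc
        rintro x ⟨j, hj, rfl⟩
        intro k hk
        have : k ≠ j := fun he => hk (he ▸ hj)
        simp [Finsupp.single_apply, Ne.symm this]
      have hczero : ∀ k, k ∉ (↑s : Set {i : ℕ // (i : ℕ∞) < N}) → c k = 0 := hcs
      apply ha
      apply unit_of_one a
      refine (memS a _).mpr ⟨h, ⟨hh, ?_⟩, ?_⟩
      · intro j hj
        have hja : j ≠ a := fun he => by rw [he] at hj; omega
        have hjs : j ∉ (↑s : Set {i : ℕ // (i : ℕ∞) < N}) := by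
          intro hjmem
          have := hs j hjmem
          omega
        have : h j + c j = Finsupp.single a (1 : ZMod q) j := by rw [← Finsupp.add_apply, hsum]
        rw [hczero j hjs, Finsupp.single_apply, if_neg (fun he => hja he.symm)] at this
        simpa using this
      · have has : a ∉ (↑s : Set {i : ℕ // (i : ℕ∞) < N}) := by
          intro hamem
          have := hs a hamem
          omega
        have : h a + c a = Finsupp.single a (1 : ZMod q) a := by rw [← Finsupp.add_apply, hsum]
        rw [hczero a has, Finsupp.single_eq_same] at this
        simpa using this
    have main : ∀ (n : ℕ) (s : Finset {i : ℕ // (i : ℕ∞) < N}), s.card = n →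
        (∀ b ∈ s, ¬ IsUnit ((g b) b)) → 2 ^ s.card * (H ⊔ E s).index ≤ H.index := by
      intro n
      induction n with
      | zero =>
        intro s hcard _
        rw [Finset.card_eq_zero.mp hcard]
        simp only [E, Finset.coe_empty, Set.image_empty, AddSubgroup.closure_empty,
          sup_bot_eq, Finset.card_empty, pow_zero, one_mul]
        exact le_refl _
      | succ n ih =>
        intro s hcard hsT
        have hne : s.Nonempty := Finset.card_pos.mp (by omega)
        obtain ⟨a, haS, hamax⟩ := s.exists_max_image (fun j => (j : ℕ)) hne
        set s' := s.erase a with hs'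
        have hcard' : s'.card = n := by rw [hs', Finset.card_erase_of_mem haS]; omega
        have hAB : H ⊔ E s' ≤ H ⊔ E s := by
          apply sup_le_sup_left
          exact AddSubgroup.closure_mono (Set.image_mono (by exact_mod_cast Finset.erase_subset _ _))
        have hsingle_mem : Finsupp.single a (1 : ZMod q) ∈ H ⊔ E s :=
          le_sup_right (a := H) (AddSubgroup.subset_closure ⟨a, haS, rfl⟩)
        have hnotle : ¬ (H ⊔ E s ≤ H ⊔ E s') := by
          intro hle
          refine hsingle_not a s' (hsT a haS) ?_ (hle hsingle_mem)
          intro b hb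
          have hbs : b ∈ s := Finset.mem_of_mem_erase hb
          have hba : b ≠ a := Finset.ne_of_mem_erase hb
          have := hamax b hbs
          have : (b : ℕ) ≠ (a : ℕ) := fun he => hba (Subtype.ext he)
          omega
        have hAidx : (H ⊔ E s').index ≠ 0 := by
          intro h0
          exact hidx (Nat.eq_zero_of_zero_dvd (h0 ▸ AddSubgroup.index_dvd_of_le le_sup_left))
        have hrel := AddSubgroup.relIndex_mul_index hAB
        have hrel0 : (H ⊔ E s').relIndex (H ⊔ E s) ≠ 0 := by
          intro h0
          exact hAidx (Nat.eq_zero_of_zero_dvd (h0 ▸ AddSubgroup.relIndex_dvd_index_of_le hAB))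
        have hrel1 : (H ⊔ E s').relIndex (H ⊔ E s) ≠ 1 := by
          intro h1
          exact hnotle (AddSubgroup.relIndex_eq_one.mp h1)
        have h2le : 2 ≤ (H ⊔ E s').relIndex (H ⊔ E s) := by omega
        have hstep : 2 * (H ⊔ E s).index ≤ (H ⊔ E s').index := by
          rw [← hrel]
          exact Nat.mul_le_mul_right _ h2le
        have hih := ih s' hcard' (fun b hb => hsT b (Finset.mem_of_mem_erase hb))
        rw [hcard'] at hih
        calc 2 ^ s.card * (H ⊔ E s).index = 2 ^ n * (2 * (H ⊔ E s).index) := by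
              rw [hcard]; ring
          _ ≤ 2 ^ n * (H ⊔ E s').index := Nat.mul_le_mul_left _ hstep
          _ ≤ H.index := hih
    have bound : ∀ s : Finset {i : ℕ // (i : ℕ∞) < N},
        (∀ b ∈ s, ¬ IsUnit ((g b) b)) → 2 ^ s.card ≤ H.index := by
      intro s hsT
      have h1 : (H ⊔ E s).index ≠ 0 := by
        intro h0
        exact hidx (Nat.eq_zero_of_zero_dvd (h0 ▸ AddSubgroup.index_dvd_of_le le_sup_left))
      calc 2 ^ s.card = 2 ^ s.card * 1 := by ring
        _ ≤ 2 ^ s.card * (H ⊔ E s).index := Nat.mul_le_mul_left _ (by omega)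
        _ ≤ H.index := main s.card s rfl hsT
    have hfin : {i : {i : ℕ // (i : ℕ∞) < N} | ¬ IsUnit ((g i) i)}.Finite := by
      by_contra hinf
      obtain ⟨t, hts, htf, htc⟩ :=
        Set.Infinite.exists_subset_ncard_eq hinf H.index
      have hsub : ∀ b ∈ htf.toFinset, ¬ IsUnit ((g b) b) := by
        intro b hb
        exact hts (htf.mem_toFinset.mp hb)
      have := bound htf.toFinset hsub
      rw [Set.ncard_eq_toFinset_card t htf] at htc
      rw [htc] at this
      exact absurd this (not_le.mpr Nat.lt_two_pow_self)
    refine ⟨hfin, ?_⟩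
    have hsub : ∀ b ∈ hfin.toFinset, ¬ IsUnit ((g b) b) := fun b hb => hfin.mem_toFinset.mp hb
    have hb := bound hfin.toFinset hsub
    have hcard : Nat.card {i : {i : ℕ // (i : ℕ∞) < N} | ¬ IsUnit ((g i) i)} = hfin.toFinset.card := by
      rw [Nat.card_coe_set_eq, Set.ncard_eq_toFinset_card _ hfin]
    rw [hcard]
    exact lt_of_lt_of_le Nat.lt_two_pow_self hb
  · -- H ∩ Gi characterization
    intro i f
    constructor
    · rintro ⟨hfH, hfz⟩
      have := key ((i : ℕ) + 1) f hfH (fun j hj => hfz j (by omega))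
      convert this using 2
      ext x
      constructor
      · rintro ⟨j, hji, rfl⟩; exact ⟨j, by omega, rfl⟩
      · rintro ⟨j, hji, rfl⟩; exact ⟨j, by omega, rfl⟩
    · intro hf
      have := closure_le i hf
      exact ⟨this.1, (memGi i f).mp this.2⟩
  · -- H = closure range g
    apply le_antisymm
    · intro f hf
      have hb : ∀ j : {i : ℕ // (i : ℕ∞) < N}, (f.support.sup fun j => (j : ℕ)) + 1 ≤ (j : ℕ) → f j = 0 := by
        intro j hj
        by_contra hne
        have : (j : ℕ) ≤ f.support.sup fun j => (j : ℕ) :=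
          Finset.le_sup (Finsupp.mem_support_iff.mpr hne)
        omega
      have := key _ f hf hb
      refine AddSubgroup.closure_mono ?_ this
      rintro x ⟨j, _, rfl⟩
      exact ⟨j, rfl⟩
    · rw [AddSubgroup.closure_le]
      rintro x ⟨j, rfl⟩
      exact hgH j
  · -- q = 0 case
    intro hq i
    subst hq
    intro h0
    have hmem : H.index • Finsupp.single i (1 : ZMod 0) ∈ H := AddSubgroup.nsmul_index_mem H _
    have hS : ((H.index : ℤ) : ZMod 0) ∈ S i := by
      refine (memS i _).mpr ⟨H.index • Finsupp.single i (1 : ZMod 0), ⟨hmem, ?_⟩, ?_⟩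
      · intro j hj
        have : j ≠ i := fun h => by simp [h] at hj
        simp [Finsupp.smul_apply, Finsupp.single_apply, Ne.symm this]
      · simp [Finsupp.smul_apply, Finsupp.single_apply]; rfl
    rw [hgS i, h0] at hS
    replace hS := AddSubgroup.mem_zmultiples_iff.mp hS
    obtain ⟨k, hk⟩ := hS
    have : (H.index : ℤ) = 0 := by rw [← hk]; exact smul_zero k
    exact hidx (by exact_mod_cast this)
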